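/- Let b > 0 and l ∈ ℝ with -3/2 < l < -1. Define on (0, ∞) the potential V^{im}_{l,b}(x) = b²x²/4 + (l+1)(l+2)/x² - b(l + 3/2) + 6b(l+1)/(b x² - 2(l+1))², and the function η(x) = x^{l+2}·exp(-b x²/4)/√(b x² - 2(l+1)). Then b x² - 2(l+1) > 0 for all x > 0, η is twice differentiable on (0, ∞), and -η''(x) + V^{im}_{l,b}(x)·η(x) = 0 for all x > 0. -/

import Mathlib

noncomputable def etaFD (b l : ℝ) : ℝ → ℝ :=
  fun y : ℝ => y ^ (l + 2) * Real.exp (-b * y ^ 2 / 4)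
    / Real.sqrt (b * y ^ 2 - 2 * (l + 1))

noncomputable def etaFD1 (b l : ℝ) : ℝ → ℝ :=
  fun y : ℝ => y ^ (l + 2) * Real.exp (-b * y ^ 2 / 4) *
      ((l + 2) / y - b * y / 2 - b * y / (b * y ^ 2 - 2 * (l + 1)))
    / Real.sqrt (b * y ^ 2 - 2 * (l + 1))

lemma hasDerivAt_etaFD (b l : ℝ) (x : ℝ) (hx : 0 < x)
    (hS : 0 < b * x ^ 2 - 2 * (l + 1)) :
    HasDerivAt (etaFD b l) (etaFD1 b l x) x := by
  have hx' : x ≠ 0 := hx.ne'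
  have hr0 : Real.sqrt (b * x ^ 2 - 2 * (l + 1)) ≠ 0 := (Real.sqrt_pos.mpr hS).ne'
  have h1 : HasDerivAt (fun y : ℝ => y ^ (l + 2)) ((l + 2) * x ^ (l + 2 - 1)) x :=
    Real.hasDerivAt_rpow_const (Or.inl hx')
  have h2 : HasDerivAt (fun y : ℝ => -b * y ^ 2 / 4) (-b * (2 * x) / 4) x := by
    have := ((hasDerivAt_pow 2 x).const_mul (-b)).div_const 4
    simpa using this
  have h3 := h2.exp
  have h4 : HasDerivAt (fun y : ℝ => b * y ^ 2 - 2 * (l + 1)) (b * (2 * x)) x := by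
    have := ((hasDerivAt_pow 2 x).const_mul b).sub_const (2 * (l + 1))
    simpa using this
  have h5 := h4.sqrt hS.ne'
  have h6 : HasDerivAt (etaFD b l) _ x := (h1.mul h3).div h5 hr0
  convert h6 using 1
  have hpow : x ^ (l + 2 - 1) = x ^ (l + 2) / x := by
    rw [Real.rpow_sub hx, Real.rpow_one]
  simp only [etaFD1, hpow, Pi.mul_apply]
  set r := Real.sqrt (b * x ^ 2 - 2 * (l + 1)) with hr
  have hr2 : r ^ 2 = b * x ^ 2 - 2 * (l + 1) := Real.sq_sqrt hS.le
  rw [← hr2]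
  field_simp
  ring

lemma hasDerivAt_etaFD1 (b l : ℝ) (x : ℝ) (hx : 0 < x)
    (hS : 0 < b * x ^ 2 - 2 * (l + 1)) :
    HasDerivAt (etaFD1 b l)
      ((b ^ 2 * x ^ 2 / 4 + (l + 1) * (l + 2) / x ^ 2 - b * (l + 3 / 2)
          + 6 * b * (l + 1) / (b * x ^ 2 - 2 * (l + 1)) ^ 2) * etaFD b l x) x := by
  have hx' : x ≠ 0 := hx.ne'
  have hr0 : Real.sqrt (b * x ^ 2 - 2 * (l + 1)) ≠ 0 := (Real.sqrt_pos.mpr hS).ne'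
  have h1 : HasDerivAt (fun y : ℝ => y ^ (l + 2)) ((l + 2) * x ^ (l + 2 - 1)) x :=
    Real.hasDerivAt_rpow_const (Or.inl hx')
  have h2 : HasDerivAt (fun y : ℝ => -b * y ^ 2 / 4) (-b * (2 * x) / 4) x := by
    have := ((hasDerivAt_pow 2 x).const_mul (-b)).div_const 4
    simpa using this
  have h3 := h2.exp
  have h4 : HasDerivAt (fun y : ℝ => b * y ^ 2 - 2 * (l + 1)) (b * (2 * x)) x := by
    have := ((hasDerivAt_pow 2 x).const_mul b).sub_const (2 * (l + 1))
    simpa using this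
  have h5 := h4.sqrt hS.ne'
  have hW1 : HasDerivAt (fun y : ℝ => (l + 2) / y) ((0 * x - (l + 2) * 1) / x ^ 2) x :=
    (hasDerivAt_const x (l + 2)).div (hasDerivAt_id x) hx'
  have hW2 : HasDerivAt (fun y : ℝ => b * y / 2) (b * 1 / 2) x :=
    ((hasDerivAt_id x).const_mul b).div_const 2
  have hW3 : HasDerivAt (fun y : ℝ => b * y / (b * y ^ 2 - 2 * (l + 1)))
      ((b * 1 * (b * x ^ 2 - 2 * (l + 1)) - b * x * (b * (2 * x)))
        / (b * x ^ 2 - 2 * (l + 1)) ^ 2) x :=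
    ((hasDerivAt_id x).const_mul b).div h4 hS.ne'
  have hW := (hW1.sub hW2).sub hW3
  have h6 : HasDerivAt (etaFD1 b l) _ x := (((h1.mul h3).mul hW).div h5 hr0)
  convert h6 using 1
  have hpow : x ^ (l + 2 - 1) = x ^ (l + 2) / x := by
    rw [Real.rpow_sub hx, Real.rpow_one]
  simp only [etaFD, hpow, Pi.mul_apply, Pi.sub_apply]
  set r := Real.sqrt (b * x ^ 2 - 2 * (l + 1)) with hr
  have hr2 : r ^ 2 = b * x ^ 2 - 2 * (l + 1) := Real.sq_sqrt hS.le
  rw [← hr2]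
  set E := Real.exp (-b * x ^ 2 / 4) with hE
  set T := x ^ (l + 2) with hT
  field_simp
  linear_combination (b * x ^ 2 * (8 * r ^ 2 + 24) * (T * E)) * hr2

/-- **Example: new potential from the generalized finite-difference
transformation of the radial oscillator.** For `b > 0` and `-3/2 < l < -1`,
set on `(0, ∞)`
`V^{im}_{l,b}(x) = b²x²/4 + (l+1)(l+2)/x² - b(l + 3/2) + 6b(l+1)/(bx² - 2(l+1))²`
and `η(x) = x^{l+2} e^{-bx²/4} / √(bx² - 2(l+1))`. Then `bx² - 2(l+1) > 0`
for all `x > 0`, `η` is twice differentiable on `(0, ∞)`, and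
`-η'' + V^{im}_{l,b} η = 0` on `(0, ∞)`. -/
theorem radial_oscillator_image_potential_eigenstate
    (b l : ℝ) (hb : 0 < b) (hl₁ : -(3 / 2 : ℝ) < l) (hl₂ : l < -1) :
    (∀ x : ℝ, 0 < x → 0 < b * x ^ 2 - 2 * (l + 1)) ∧
    (∀ x : ℝ, 0 < x →
      DifferentiableAt ℝ
        (fun y : ℝ => y ^ (l + 2) * Real.exp (-b * y ^ 2 / 4)
          / Real.sqrt (b * y ^ 2 - 2 * (l + 1))) x) ∧
    (∀ x : ℝ, 0 < x →
      DifferentiableAt ℝ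
        (deriv (fun y : ℝ => y ^ (l + 2) * Real.exp (-b * y ^ 2 / 4)
          / Real.sqrt (b * y ^ 2 - 2 * (l + 1)))) x) ∧
    (∀ x : ℝ, 0 < x →
      -(deriv (deriv (fun y : ℝ => y ^ (l + 2) * Real.exp (-b * y ^ 2 / 4)
            / Real.sqrt (b * y ^ 2 - 2 * (l + 1)))) x)
          + (b ^ 2 * x ^ 2 / 4 + (l + 1) * (l + 2) / x ^ 2
              - b * (l + 3 / 2)
              + 6 * b * (l + 1) / (b * x ^ 2 - 2 * (l + 1)) ^ 2)
            * (x ^ (l + 2) * Real.exp (-b * x ^ 2 / 4)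
                / Real.sqrt (b * x ^ 2 - 2 * (l + 1)))
        = 0) := by
  have hS : ∀ x : ℝ, 0 < x → 0 < b * x ^ 2 - 2 * (l + 1) := by
    intro x hx
    nlinarith [mul_pos hb (pow_pos hx 2)]
  have hfun : (fun y : ℝ => y ^ (l + 2) * Real.exp (-b * y ^ 2 / 4)
      / Real.sqrt (b * y ^ 2 - 2 * (l + 1))) = etaFD b l := rfl
  have hev : ∀ x : ℝ, 0 < x →
      deriv (etaFD b l) =ᶠ[nhds x] etaFD1 b l := by
    intro x hx
    filter_upwards [Ioi_mem_nhds hx] with y hy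
    exact (hasDerivAt_etaFD b l y hy (hS y hy)).deriv
  refine ⟨hS, ?_, ?_, ?_⟩
  · intro x hx
    rw [hfun]
    exact (hasDerivAt_etaFD b l x hx (hS x hx)).differentiableAt
  · intro x hx
    rw [hfun]
    exact ((hev x hx).differentiableAt_iff).mpr
      (hasDerivAt_etaFD1 b l x hx (hS x hx)).differentiableAt
  · intro x hx
    rw [hfun, (hev x hx).deriv_eq, (hasDerivAt_etaFD1 b l x hx (hS x hx)).deriv]
    simp only [etaFD]
    ring
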